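/- Let k be a field and φ ∈ k[t][x] a monic quadratic polynomial with critical point γ and adjusted post-critical orbit (cₙ) (c₁ = −φ(γ), cₘ = φ⁽ᵐ⁾(γ) for m ≥ 2). Let r be an irreducible element of k[t] and suppose r divides cₙ and r divides cₘ for some m with n/2 < m < n. Then r divides φ⁽ⁿ⁻ᵐ⁾(0). -/
import Mathlib

open Polynomial

/-- Let `φ = (x - γ)² - c₁ ∈ k[t][x]` be monic quadratic with critical point `γ`
and adjusted post-critical orbit `(cₙ)` (`c₁ = -φ(γ)`, `cₘ = φ⁽ᵐ⁾(γ)` for `m ≥ 2`).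
If `r ∈ k[t]` is irreducible, `r ∣ cₙ` and `r ∣ cₘ` for some `m` with `n/2 < m < n`,
then `r ∣ φ⁽ⁿ⁻ᵐ⁾(0)`. -/
theorem stmt_6 {k : Type*} [Field k] (γ c₁ : Polynomial k)
    (c : ℕ → Polynomial k)
    (hc1 : c 1 = c₁)
    (hcn : ∀ m, 2 ≤ m → c m = (fun x => (x - γ) ^ 2 - c₁)^[m] γ)
    (r : Polynomial k) (hr : Irreducible r)
    (n m : ℕ) (hm : m < n) (hhalf : n < 2 * m)
    (hrn : r ∣ c n) (hrm : r ∣ c m) :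
    r ∣ (fun x => (x - γ) ^ 2 - c₁)^[n - m] 0 := by
  set φ : Polynomial k → Polynomial k := fun x => (x - γ) ^ 2 - c₁ with hφ
  have hm2 : 2 ≤ m := by omega
  have hn2 : 2 ≤ n := by omega
  have key : ∀ j, r ∣ φ^[j] 0 - φ^[j] (c m) := by
    intro j
    induction j with
    | zero => simpa using dvd_neg.mpr hrm
    | succ j ih =>
      rw [Function.iterate_succ_apply', Function.iterate_succ_apply']
      have h : φ (φ^[j] 0) - φ (φ^[j] (c m)) =
          (φ^[j] 0 - φ^[j] (c m)) * (φ^[j] 0 + φ^[j] (c m) - 2 * γ) := by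
        simp only [hφ]; ring
      rw [h]; exact ih.mul_right _
  have h1 := key (n - m)
  have h2 : φ^[n - m] (c m) = c n := by
    rw [hcn m hm2, hcn n hn2, ← Function.iterate_add_apply]
    congr 1; omega
  rw [h2] at h1
  simpa using dvd_add h1 hrn
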